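/- Let F be a set of functions f : Λ → {-1,1}^n and fix inputs λ_1,...,λ_m ∈ Λ and labels x_1,...,x_m ∈ {-1,1}^n. Then the empirical Rademacher complexity of the loss class {(λ,x) ↦ d_H(f(λ),x)/n : f ∈ F} is at most (1/(2n)) * sum_{j=1}^n R_m(F[j]), where R_m(F[j]) = E_σ[sup_{f∈F} (1/m) sum_{i=1}^m σ_i f(λ_i)[j]] is the bit-wise Rademacher complexity of the j-th output coordinate and σ_i are i.i.d. Rademacher random variables. -/

import Mathlib

open Finset

/-- The ±1 value of a Boolean sign. -/
def sgn (b : Bool) : ℝ := if b then 1 else -1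

lemma sgn_not (b : Bool) : sgn (!b) = - sgn b := by cases b <;> simp [sgn]

lemma sgn_pm (b : Bool) : sgn b = 1 ∨ sgn b = -1 := by cases b <;> simp [sgn]

/-- Algebraic decomposition of the weighted Hamming loss. -/
lemma decomp {Λ : Type*} (n m : ℕ) (hn : (n:ℝ) ≠ 0) (hm : (m:ℝ) ≠ 0)
    (f : Λ → Fin n → ℝ) (lam : Fin m → Λ) (x : Fin m → Fin n → ℝ)
    (hf : ∀ i j, f (lam i) j = 1 ∨ f (lam i) j = -1)
    (hx : ∀ i j, x i j = 1 ∨ x i j = -1) (s : Fin m → ℝ) :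
    (1/(m:ℝ)) * ∑ i, s i * (((Finset.univ.filter (fun j => f (lam i) j ≠ x i j)).card : ℝ)/n)
    = (1/(2*(m:ℝ))) * ∑ i, s i
      + (1/(2*(n:ℝ))) * ∑ j, (1/(m:ℝ)) * ∑ i, (-(s i * x i j)) * f (lam i) j := by
  have hcard : ∀ i, ((Finset.univ.filter (fun j => f (lam i) j ≠ x i j)).card : ℝ)
      = ∑ j, (1 - f (lam i) j * x i j)/2 := by
    intro i
    rw [Finset.card_filter]
    push_cast
    refine Finset.sum_congr rfl fun j _ => ?_
    rcases hf i j with h1 | h1 <;> rcases hx i j with h2 | h2 <;>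
      simp [h1, h2] <;> norm_num
  simp only [hcard]
  have key : ∀ i, s i * ((∑ j, (1 - f (lam i) j * x i j)/2)/n)
      = s i / 2 + (∑ j, (-(s i * x i j)) * f (lam i) j) / (2*n) := by
    intro i
    have h1 : ∑ j, (1 - f (lam i) j * x i j)/2
        = ((n:ℝ) - ∑ j, f (lam i) j * x i j)/2 := by
      rw [← Finset.sum_div, Finset.sum_sub_distrib, Finset.sum_const, card_univ,
        Fintype.card_fin, nsmul_eq_mul, mul_one]
    have h2 : ∑ j, (-(s i * x i j)) * f (lam i) j
        = -(s i * ∑ j, f (lam i) j * x i j) := by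
      rw [Finset.mul_sum, ← Finset.sum_neg_distrib]
      exact Finset.sum_congr rfl fun j _ => by ring
    rw [h1, h2]
    field_simp
    ring
  simp only [key]
  have swap : ∑ j, (1/(m:ℝ)) * ∑ i, (-(s i * x i j)) * f (lam i) j
      = (1/(m:ℝ)) * ∑ i, ∑ j, (-(s i * x i j)) * f (lam i) j := by
    rw [← Finset.mul_sum, Finset.sum_comm]
  rw [swap, Finset.sum_add_distrib, ← Finset.sum_div, ← Finset.sum_div]
  field_simp

lemma bdd_aux {Λ : Type*} {n m : ℕ} (hm : (m:ℝ) ≠ 0) (F : Set (Λ → Fin n → ℝ))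
    (hFpm : ∀ f ∈ F, ∀ lam j, f lam j = 1 ∨ f lam j = -1)
    (lam : Fin m → Λ) (c : Fin m → ℝ) (hc : ∀ i, c i = 1 ∨ c i = -1) (j : Fin n) :
    BddAbove {t : ℝ | ∃ f ∈ F, t = (1/(m:ℝ)) * ∑ i, c i * f (lam i) j} := by
  refine ⟨1, ?_⟩
  rintro t ⟨f, hf, rfl⟩
  have hsum : ∑ i, c i * f (lam i) j ≤ (m : ℝ) := by
    calc ∑ i, c i * f (lam i) j ≤ ∑ _i : Fin m, (1:ℝ) := by
          refine Finset.sum_le_sum fun i _ => ?_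
          rcases hc i with h1 | h1 <;> rcases hFpm f hf (lam i) j with h2 | h2 <;>
            rw [h1, h2] <;> norm_num
      _ = (m : ℝ) := by simp
  have h0 : (0:ℝ) ≤ 1/(m:ℝ) := by positivity
  calc (1/(m:ℝ)) * ∑ i, c i * f (lam i) j ≤ (1/(m:ℝ)) * m := by gcongr
    _ = 1 := by field_simp

lemma sum_sgn_zero (m : ℕ) (i : Fin m) :
    ∑ σ : Fin m → Bool, sgn (σ i) = 0 := by
  have hinv : Function.Involutive (fun σ : Fin m → Bool => Function.update σ i (!(σ i))) := by
    intro σ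
    funext k
    by_cases h : k = i
    · subst h; simp
    · simp [Function.update_of_ne h]
  let e : Equiv.Perm (Fin m → Bool) := hinv.toPerm _
  have h1 : ∑ σ : Fin m → Bool, sgn (e σ i) = ∑ σ : Fin m → Bool, sgn (σ i) :=
    Equiv.sum_comp e (fun σ => sgn (σ i))
  have h2 : ∀ σ : Fin m → Bool, sgn (e σ i) = - sgn (σ i) := by
    intro σ
    show sgn (Function.update σ i (!(σ i)) i) = _
    rw [Function.update_self, sgn_not]
  simp only [h2, Finset.sum_neg_distrib] at h1
  linarith

lemma reidx {Λ : Type*} {n m : ℕ} (F : Set (Λ → Fin n → ℝ))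
    (lam : Fin m → Λ) (x : Fin m → Fin n → ℝ)
    (hx : ∀ i j, x i j = 1 ∨ x i j = -1) (j : Fin n) :
    ∑ σ : Fin m → Bool,
        sSup {t : ℝ | ∃ f ∈ F, t = (1/(m:ℝ)) * ∑ i, (-(sgn (σ i) * x i j)) * f (lam i) j}
    = ∑ σ : Fin m → Bool,
        sSup {t : ℝ | ∃ f ∈ F, t = (1/(m:ℝ)) * ∑ i, sgn (σ i) * f (lam i) j} := by
  classical
  have hinv : Function.Involutive
      (fun σ : Fin m → Bool => fun i => if x i j = 1 then !(σ i) else σ i) := by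
    intro σ
    funext i
    by_cases h : x i j = 1 <;> simp [h]
  let e : Equiv.Perm (Fin m → Bool) := hinv.toPerm _
  have hcoef : ∀ (σ : Fin m → Bool) (i : Fin m), -(sgn (σ i) * x i j) = sgn (e σ i) := by
    intro σ i
    show _ = sgn (if x i j = 1 then !(σ i) else σ i)
    rcases hx i j with h | h
    · rw [h, if_pos rfl, sgn_not]; ring
    · have h' : ¬ (x i j = 1) := by rw [h]; norm_num
      rw [if_neg h', h]; ring
  calc ∑ σ : Fin m → Bool,
        sSup {t : ℝ | ∃ f ∈ F, t = (1/(m:ℝ)) * ∑ i, (-(sgn (σ i) * x i j)) * f (lam i) j}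
      = ∑ σ : Fin m → Bool,
        sSup {t : ℝ | ∃ f ∈ F, t = (1/(m:ℝ)) * ∑ i, sgn (e σ i) * f (lam i) j} := by
        refine Finset.sum_congr rfl fun σ _ => ?_
        have hsum : ∀ f : Λ → Fin n → ℝ,
            ∑ i, (-(sgn (σ i) * x i j)) * f (lam i) j
            = ∑ i, sgn (e σ i) * f (lam i) j :=
          fun f => Finset.sum_congr rfl fun i _ => by rw [hcoef]
        congr 1
        ext t
        constructor
        · rintro ⟨f, hf, rfl⟩
          exact ⟨f, hf, by rw [hsum f]⟩
        · rintro ⟨f, hf, rfl⟩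
          exact ⟨f, hf, by rw [hsum f]⟩
    _ = _ := Equiv.sum_comp e
        (fun τ => sSup {t : ℝ | ∃ f ∈ F, t = (1/(m:ℝ)) * ∑ i, sgn (τ i) * f (lam i) j})

theorem loss_rademacher_le_bitwise
    {Λ : Type*} (n m : ℕ) (hn : 0 < n) (hm : 0 < m)
    (F : Set (Λ → Fin n → ℝ)) (hF : F.Nonempty)
    (hFpm : ∀ f ∈ F, ∀ lam j, f lam j = 1 ∨ f lam j = -1)
    (lam : Fin m → Λ) (x : Fin m → Fin n → ℝ)
    (hx : ∀ i j, x i j = 1 ∨ x i j = -1) :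
    (1 / (2 : ℝ) ^ m) *
      ∑ σ : Fin m → Bool,
        sSup {t : ℝ | ∃ f ∈ F, t = (1 / (m : ℝ)) * ∑ i,
          sgn (σ i) *
            (((Finset.univ.filter (fun j => f (lam i) j ≠ x i j)).card : ℝ) / n)} ≤
    (1 / (2 * (n : ℝ))) * ∑ j : Fin n,
      (1 / (2 : ℝ) ^ m) *
        ∑ σ : Fin m → Bool,
          sSup {t : ℝ | ∃ f ∈ F, t = (1 / (m : ℝ)) * ∑ i, sgn (σ i) * f (lam i) j} := by
  classical
  have hn' : (n:ℝ) ≠ 0 := Nat.cast_ne_zero.mpr hn.ne'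
  have hm' : (m:ℝ) ≠ 0 := Nat.cast_ne_zero.mpr hm.ne'
  obtain ⟨f₀, hf₀⟩ := hF
  have step1 : ∀ σ : Fin m → Bool,
      sSup {t : ℝ | ∃ f ∈ F, t = (1/(m:ℝ)) * ∑ i,
          sgn (σ i) * (((Finset.univ.filter (fun j => f (lam i) j ≠ x i j)).card : ℝ)/n)}
      ≤ (1/(2*(m:ℝ))) * ∑ i, sgn (σ i)
        + (1/(2*(n:ℝ))) * ∑ j, sSup {t : ℝ | ∃ f ∈ F,
            t = (1/(m:ℝ)) * ∑ i, (-(sgn (σ i) * x i j)) * f (lam i) j} := by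
    intro σ
    refine csSup_le ⟨_, f₀, hf₀, rfl⟩ ?_
    rintro t ⟨f, hf, rfl⟩
    rw [decomp n m hn' hm' f lam x (fun i j => hFpm f hf (lam i) j) hx (fun i => sgn (σ i))]
    have hcn : (0:ℝ) ≤ 1/(2*(n:ℝ)) := by positivity
    gcongr with j hj
    refine le_csSup (bdd_aux hm' F hFpm lam _ (fun i => ?_) j) ⟨f, hf, rfl⟩
    rcases sgn_pm (σ i) with h1 | h1 <;> rcases hx i j with h2 | h2 <;>
      rw [h1, h2] <;> norm_num
  have step2 : ∑ σ : Fin m → Bool,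
      sSup {t : ℝ | ∃ f ∈ F, t = (1/(m:ℝ)) * ∑ i,
          sgn (σ i) * (((Finset.univ.filter (fun j => f (lam i) j ≠ x i j)).card : ℝ)/n)}
      ≤ (1/(2*(n:ℝ))) * ∑ j : Fin n, ∑ σ : Fin m → Bool,
          sSup {t : ℝ | ∃ f ∈ F, t = (1/(m:ℝ)) * ∑ i, sgn (σ i) * f (lam i) j} := by
    calc ∑ σ : Fin m → Bool,
        sSup {t : ℝ | ∃ f ∈ F, t = (1/(m:ℝ)) * ∑ i,
          sgn (σ i) * (((Finset.univ.filter (fun j => f (lam i) j ≠ x i j)).card : ℝ)/n)}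
        ≤ ∑ σ : Fin m → Bool, ((1/(2*(m:ℝ))) * ∑ i, sgn (σ i)
            + (1/(2*(n:ℝ))) * ∑ j, sSup {t : ℝ | ∃ f ∈ F,
                t = (1/(m:ℝ)) * ∑ i, (-(sgn (σ i) * x i j)) * f (lam i) j}) :=
          Finset.sum_le_sum fun σ _ => step1 σ
      _ = (1/(2*(n:ℝ))) * ∑ j : Fin n, ∑ σ : Fin m → Bool,
            sSup {t : ℝ | ∃ f ∈ F,
              t = (1/(m:ℝ)) * ∑ i, (-(sgn (σ i) * x i j)) * f (lam i) j} := by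
          rw [Finset.sum_add_distrib, ← Finset.mul_sum, ← Finset.mul_sum,
            Finset.sum_comm]
          have hz : ∑ i : Fin m, ∑ σ : Fin m → Bool, sgn (σ i) = 0 := by
            simp [sum_sgn_zero]
          rw [hz, mul_zero, zero_add, Finset.sum_comm]
      _ = _ := by rw [Finset.sum_congr rfl fun j _ => reidx F lam x hx j]
  have h2m : (0:ℝ) ≤ 1/(2:ℝ)^m := by positivity
  calc (1 / (2 : ℝ) ^ m) *
      ∑ σ : Fin m → Bool,
        sSup {t : ℝ | ∃ f ∈ F, t = (1 / (m : ℝ)) * ∑ i,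
          sgn (σ i) *
            (((Finset.univ.filter (fun j => f (lam i) j ≠ x i j)).card : ℝ) / n)}
      ≤ (1 / (2 : ℝ) ^ m) * ((1/(2*(n:ℝ))) * ∑ j : Fin n, ∑ σ : Fin m → Bool,
          sSup {t : ℝ | ∃ f ∈ F, t = (1/(m:ℝ)) * ∑ i, sgn (σ i) * f (lam i) j}) :=
        mul_le_mul_of_nonneg_left step2 h2m
    _ = _ := by
        rw [← Finset.mul_sum]
        ring
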